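/- arXiv:1507.03286 — 3 statements merged into one kernel-verified Lean document; each statement's English description precedes it below -/
import Mathlib

section
/- Let C be an [n,k,d] binary linear code. Then for every integer a with 1 ≤ a ≤ n, the equality of ideals F̄(C) + Ī(Y,a) = ⟨ȳ_1,…,ȳ_n⟩ holds in S̄ if and only if a ≤ d. -/
open scoped Classical
open MvPolynomial

set_option synthInstance.maxHeartbeats 1000000

noncomputable section

/-- The ideal `I(Y,a)` of `S = 𝔽₂[y_1,…,y_n]` generated by all squarefree
monomials `y_{i_1}⋯y_{i_a}`; it is `S` for `a = 0` and `(0)` for `a > n`. -/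
def sqfreeIdeal (n : ℕ) (a : ℕ) : Ideal (MvPolynomial (Fin n) (ZMod 2)) :=
  Ideal.span {f | ∃ T : Finset (Fin n), T.card = a ∧ f = ∏ i ∈ T, MvPolynomial.X i}

/-- The ideal `⟨y_1²−y_1,…,y_n²−y_n⟩` of field equations. -/
def fieldEqIdeal (n : ℕ) : Ideal (MvPolynomial (Fin n) (ZMod 2)) :=
  Ideal.span {f | ∃ i : Fin n, f = MvPolynomial.X i ^ 2 - MvPolynomial.X i}

/-- The linear form `ℓ_i = ∑_j G_{ji} x_j` dual to the `i`-th column of `G`. -/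
def dualForm {k n : ℕ} (G : Matrix (Fin k) (Fin n) (ZMod 2)) (i : Fin n) :
    MvPolynomial (Fin k) (ZMod 2) :=
  ∑ j, MvPolynomial.C (G j i) * MvPolynomial.X j

/-- `F(C) = ker γ`, where `γ : S → R` is the `𝔽₂`-algebra map `y_i ↦ ℓ_i`. -/
def relIdeal {k n : ℕ} (G : Matrix (Fin k) (Fin n) (ZMod 2)) :
    Ideal (MvPolynomial (Fin n) (ZMod 2)) :=
  RingHom.ker (MvPolynomial.aeval (dualForm G) :
    MvPolynomial (Fin n) (ZMod 2) →ₐ[ZMod 2] MvPolynomial (Fin k) (ZMod 2)).toRingHom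

/-- The binary linear code with generating matrix `G`: the row space of `G`. -/
def code {k n : ℕ} (G : Matrix (Fin k) (Fin n) (ZMod 2)) :
    Submodule (ZMod 2) (Fin n → ZMod 2) :=
  LinearMap.range (Matrix.vecMulLinear G)

/-- `d` is the minimum distance of the binary code generated by `G`. -/
def IsMinDist {k n : ℕ} (G : Matrix (Fin k) (Fin n) (ZMod 2)) (d : ℕ) : Prop :=
  IsLeast {w : ℕ | ∃ v ∈ code G, v ≠ 0 ∧ hammingNorm v = w} d

namespace BinAux

variable {n k : ℕ}

/-- Evaluation at any point kills the field equations. -/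
lemma fieldEq_le_ker_eval (w : Fin n → ZMod 2) :
    fieldEqIdeal n ≤
      RingHom.ker (MvPolynomial.eval w :
        MvPolynomial (Fin n) (ZMod 2) →+* ZMod 2) := by
  rw [fieldEqIdeal, Ideal.span_le]
  rintro f ⟨i, rfl⟩
  have hsq : ∀ x : ZMod 2, x ^ 2 = x := by decide
  simp [RingHom.mem_ker, hsq]

/-- Every element of `S` is idempotent modulo the field equations. -/
lemma sq_sub_self_mem (f : MvPolynomial (Fin n) (ZMod 2)) :
    f ^ 2 - f ∈ fieldEqIdeal n := by
  have h2 : (2 : MvPolynomial (Fin n) (ZMod 2)) = 0 := by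
    have := CharP.cast_eq_zero (MvPolynomial (Fin n) (ZMod 2)) 2
    exact_mod_cast this
  induction f using MvPolynomial.induction_on with
  | C a =>
      have ha : a ^ 2 = a := by revert a; decide
      rw [← map_pow, ha, sub_self]
      exact Ideal.zero_mem _
  | add p q hp hq =>
      have hre : (p + q) ^ 2 - (p + q) = (p ^ 2 - p) + (q ^ 2 - q) + 2 * (p * q) := by ring
      rw [hre, h2, zero_mul, add_zero]
      exact Ideal.add_mem _ hp hq
  | mul_X p i hp =>
      have hre : (p * X i) ^ 2 - p * X i
          = p ^ 2 * (X i ^ 2 - X i) + (p ^ 2 - p) * X i := by ring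
      rw [hre]
      refine Ideal.add_mem _ ?_ (Ideal.mul_mem_right _ _ hp)
      exact Ideal.mul_mem_left _ _ (Ideal.subset_span ⟨i, rfl⟩)

lemma mk_X_mul_self (i : Fin n) :
    Ideal.Quotient.mk (fieldEqIdeal n) (X i) * Ideal.Quotient.mk (fieldEqIdeal n) (X i)
      = Ideal.Quotient.mk (fieldEqIdeal n) (X i) := by
  rw [← map_mul, ← sq]
  exact Ideal.Quotient.eq.mpr (Ideal.subset_span ⟨i, rfl⟩)

lemma mk_X_pow (i : Fin n) {e : ℕ} (he : e ≠ 0) :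
    (Ideal.Quotient.mk (fieldEqIdeal n) (X i)) ^ e
      = Ideal.Quotient.mk (fieldEqIdeal n) (X i) := by
  induction e with
  | zero => exact absurd rfl he
  | succ m ih =>
      rcases Nat.eq_zero_or_pos m with hm | hm
      · subst hm; simp
      · rw [pow_succ, ih hm.ne', mk_X_mul_self]

/-- Squash all exponents of a monomial to at most 1. -/
def squash (m : Fin n →₀ ℕ) : Fin n →₀ ℕ :=
  m.mapRange (fun e => min e 1) (by simp)

lemma mk_monomial_squash (m : Fin n →₀ ℕ) (c : ZMod 2) :
    Ideal.Quotient.mk (fieldEqIdeal n) (monomial m c)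
      = Ideal.Quotient.mk (fieldEqIdeal n) (monomial (squash m) c) := by
  have key : ∀ s : Fin n →₀ ℕ,
      Ideal.Quotient.mk (fieldEqIdeal n) (monomial s c)
        = Ideal.Quotient.mk (fieldEqIdeal n) (C c) *
            ∏ i : Fin n, (Ideal.Quotient.mk (fieldEqIdeal n) (X i)) ^ (s i) := by
    intro s
    rw [monomial_eq, map_mul]
    congr 1
    rw [Finsupp.prod_fintype _ _ (fun i => pow_zero _), map_prod]
    simp
  rw [key m, key (squash m)]
  congr 1
  apply Finset.prod_congr rfl
  intro i _
  have hsq : squash m i = min (m i) 1 := rfl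
  rcases Nat.eq_zero_or_pos (m i) with h | h
  · simp [hsq, h]
  · rw [hsq, Nat.min_eq_right h, mk_X_pow i h.ne', pow_one]

/-- The multilinearization of a polynomial. -/
def mlin (f : MvPolynomial (Fin n) (ZMod 2)) : MvPolynomial (Fin n) (ZMod 2) :=
  ∑ m ∈ f.support, monomial (squash m) (coeff m f)

lemma sub_mlin_mem (f : MvPolynomial (Fin n) (ZMod 2)) :
    f - mlin f ∈ fieldEqIdeal n := by
  rw [← Ideal.Quotient.eq]
  conv_lhs => rw [f.as_sum]
  rw [mlin, map_sum, map_sum]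
  exact Finset.sum_congr rfl fun m _ => mk_monomial_squash m (coeff m f)

lemma mlin_mem_restrictDegree (f : MvPolynomial (Fin n) (ZMod 2)) :
    mlin f ∈ restrictDegree (Fin n) (ZMod 2) 1 := by
  rw [mem_restrictDegree]
  intro s hs i
  have hsub := MvPolynomial.support_sum (s := f.support)
    (f := fun m => monomial (squash m) (coeff m f)) hs
  obtain ⟨m, _, hm⟩ := Finset.mem_biUnion.mp hsub
  classical
  replace hm : s ∈ ((monomial (squash m)) (coeff m f)).support := hm
  rw [mem_support_iff, coeff_monomial] at hm
  split_ifs at hm with h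
  · subst h
    exact min_le_right _ _
  · exact absurd rfl hm

/-- "Combinatorial Nullstellensatz" over 𝔽₂ : a polynomial vanishing on all of
`𝔽₂ⁿ` lies in the ideal of field equations. -/
lemma mem_fieldEq_of_eval_zero {f : MvPolynomial (Fin n) (ZMod 2)}
    (h : ∀ w : Fin n → ZMod 2, eval w f = 0) : f ∈ fieldEqIdeal n := by
  have hg0 : ∀ w : Fin n → ZMod 2, eval w (mlin f) = 0 := by
    intro w
    have h1 : eval w (f - mlin f) = 0 := fieldEq_le_ker_eval w (sub_mlin_mem f)
    rw [map_sub, h w, zero_sub, neg_eq_zero] at h1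
    exact h1
  have hml : mlin f = 0 := by
    apply MvPolynomial.eq_zero_of_eval_eq_zero (Fin n) (ZMod 2) (mlin f) hg0
    have hc : Fintype.card (ZMod 2) - 1 = 1 := by rw [ZMod.card]
    rw [hc]
    exact mlin_mem_restrictDegree f
  simpa [hml] using sub_mlin_mem f

/-- The boolean indicator polynomial of a point `v ∈ 𝔽₂ⁿ`. -/
def bInd (v : Fin n → ZMod 2) : MvPolynomial (Fin n) (ZMod 2) :=
  ∏ i, (X i + C (v i) + 1)

lemma eval_bInd (w v : Fin n → ZMod 2) :
    eval w (bInd v) = if w = v then 1 else 0 := by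
  have key : ∀ x y : ZMod 2, x + y + 1 = if x = y then 1 else 0 := by decide
  rw [bInd, map_prod]
  simp only [map_add, eval_X, eval_C, map_one]
  by_cases h : w = v
  · subst h
    rw [if_pos rfl]
    apply Finset.prod_eq_one
    intro i _
    rw [key]
    simp
  · rw [if_neg h]
    obtain ⟨i, hi⟩ := Function.ne_iff.mp h
    exact Finset.prod_eq_zero (Finset.mem_univ i) (by rw [key, if_neg hi])

lemma X_sub_sum_bInd (i : Fin n) :
    (X i : MvPolynomial (Fin n) (ZMod 2)) -
      ∑ v ∈ Finset.univ.filter (fun v : Fin n → ZMod 2 => v i = 1), bInd v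
      ∈ fieldEqIdeal n := by
  apply mem_fieldEq_of_eval_zero
  intro w
  rw [map_sub, eval_X, map_sum]
  simp only [eval_bInd]
  rw [Finset.sum_ite_eq]
  by_cases h : w i = 1
  · rw [if_pos (by simp [Finset.mem_filter, h]), h, sub_self]
  · have h0 : w i = 0 := by
      have : ∀ x : ZMod 2, x ≠ 1 → x = 0 := by decide
      exact this _ h
    rw [if_neg (by simp [Finset.mem_filter, h]), h0, sub_zero]

section Code

variable (G : Matrix (Fin k) (Fin n) (ZMod 2))

lemma eval_aeval_dualForm (u : Fin k → ZMod 2) (f : MvPolynomial (Fin n) (ZMod 2)) :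
    eval u (aeval (dualForm G) f) = eval (Matrix.vecMul u G) f := by
  rw [aeval_def, MvPolynomial.algebraMap_eq, ← eval_assoc]
  have hfun : (⇑(eval u)) ∘ dualForm G = Matrix.vecMul u G := by
    funext i
    simp [Function.comp, dualForm, Matrix.vecMul, dotProduct, mul_comm]
  rw [hfun]

lemma aeval_dualForm_surjective (hrank : G.rank = k) :
    Function.Surjective (aeval (dualForm G) :
      MvPolynomial (Fin n) (ZMod 2) →ₐ[ZMod 2] MvPolynomial (Fin k) (ZMod 2)) := by
  have hmv : Function.Surjective G.mulVecLin := by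
    rw [← LinearMap.range_eq_top]
    apply Submodule.eq_top_of_finrank_eq
    rw [← Matrix.rank, hrank, Module.finrank_fintype_fun_eq_card, Fintype.card_fin]
  have hX : ∀ j : Fin k, ∃ u : MvPolynomial (Fin n) (ZMod 2), aeval (dualForm G) u = X j := by
    intro j
    obtain ⟨c, hc⟩ := hmv (Pi.single j 1)
    refine ⟨∑ i, C (c i) * X i, ?_⟩
    rw [map_sum]
    have step : ∀ i : Fin n,
        (aeval (dualForm G)) (C (c i) * X i) = ∑ j' : Fin k, C (G j' i * c i) * X j' := by
      intro i
      rw [map_mul, aeval_X, aeval_C, MvPolynomial.algebraMap_eq, dualForm, Finset.mul_sum]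
      apply Finset.sum_congr rfl
      intro j' _
      rw [← mul_assoc, ← C_mul, mul_comm (c i) (G j' i)]
    simp only [step]
    rw [Finset.sum_comm]
    have : ∀ j' : Fin k, ∑ i : Fin n, (C (G j' i * c i) * X j' : MvPolynomial (Fin k) (ZMod 2))
        = (C ((Pi.single j 1 : Fin k → ZMod 2) j') * X j' : MvPolynomial (Fin k) (ZMod 2)) := by
      intro j'
      rw [← Finset.sum_mul, ← map_sum]
      congr 2
      have := congrFun hc j'
      simpa [Matrix.mulVecLin, Matrix.mulVec, dotProduct] using this
    simp only [this]
    rw [Finset.sum_eq_single j]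
    · simp
    · intro b _ hbj
      rw [Pi.single_eq_of_ne hbj, map_zero, zero_mul]
    · intro hj; exact absurd (Finset.mem_univ j) hj
  intro r
  induction r using MvPolynomial.induction_on with
  | C a => exact ⟨C a, by rw [aeval_C, MvPolynomial.algebraMap_eq]⟩
  | add p q hp hq =>
      obtain ⟨u, hu⟩ := hp; obtain ⟨w, hw⟩ := hq
      exact ⟨u + w, by rw [map_add, hu, hw]⟩
  | mul_X p j hp =>
      obtain ⟨u, hu⟩ := hp; obtain ⟨w, hw⟩ := hX j
      exact ⟨u * w, by rw [map_mul, hu, hw]⟩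

lemma mem_rel_sup_fieldEq
    (hs : Function.Surjective (aeval (dualForm G) :
      MvPolynomial (Fin n) (ZMod 2) →ₐ[ZMod 2] MvPolynomial (Fin k) (ZMod 2)))
    {f : MvPolynomial (Fin n) (ZMod 2)}
    (hf : aeval (dualForm G) f ∈ fieldEqIdeal k) :
    f ∈ relIdeal G ⊔ fieldEqIdeal n := by
  set γ := (aeval (dualForm G) :
    MvPolynomial (Fin n) (ZMod 2) →ₐ[ZMod 2] MvPolynomial (Fin k) (ZMod 2)).toRingHom with hγ
  have h1 : fieldEqIdeal k ≤ (fieldEqIdeal n).map γ := by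
    rw [fieldEqIdeal, Ideal.span_le]
    rintro r ⟨j, rfl⟩
    obtain ⟨u, hu⟩ := hs (X j)
    have he : γ (u ^ 2 - u) = X j ^ 2 - X j := by
      rw [map_sub, map_pow]
      simp only [hγ, AlgHom.toRingHom_eq_coe, RingHom.coe_coe, hu]
    exact he ▸ Ideal.mem_map_of_mem _ (sq_sub_self_mem u)
  have h2 : f ∈ Ideal.comap γ ((fieldEqIdeal n).map γ) := by
    rw [Ideal.mem_comap]
    exact h1 hf
  rw [Ideal.comap_map_of_surjective γ hs, sup_comm] at h2
  rw [relIdeal, RingHom.ker_eq_comap_bot]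
  exact h2

end Code

end BinAux

/-- for an `[n,k,d]` binary linear code and `1 ≤ a ≤ n`, one has
`F̄(C) + Ī(Y,a) = ⟨ȳ_1,…,ȳ_n⟩` in `S̄` if and only if `a ≤ d`. -/
theorem binary_minDist_iff {k n d : ℕ} (hk : 0 < k) (hn : 0 < n)
    (G : Matrix (Fin k) (Fin n) (ZMod 2)) (hrank : G.rank = k) (hd : IsMinDist G d) :
    ∀ a : ℕ, 1 ≤ a → a ≤ n →
      ((relIdeal G).map (Ideal.Quotient.mk (fieldEqIdeal n)) +
          (sqfreeIdeal n a).map (Ideal.Quotient.mk (fieldEqIdeal n)) =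
        (Ideal.span (Set.range MvPolynomial.X)).map (Ideal.Quotient.mk (fieldEqIdeal n)) ↔
        a ≤ d) := by
  intro a ha1 han
  classical
  set q := Ideal.Quotient.mk (fieldEqIdeal n) with hqdef
  have hqsurj : Function.Surjective q := Ideal.Quotient.mk_surjective
  constructor
  · -- equality ⇒ a ≤ d
    intro heq
    by_contra hlt
    push_neg at hlt
    obtain ⟨v, hv, hvne, hwt⟩ := hd.1
    obtain ⟨i, hvi⟩ := Function.ne_iff.mp hvne
    have hmem : q (X i) ∈ (relIdeal G).map q + (sqfreeIdeal n a).map q := by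
      rw [heq]
      exact Ideal.mem_map_of_mem _ (Ideal.subset_span ⟨i, rfl⟩)
    rw [Ideal.add_eq_sup, ← Ideal.map_sup] at hmem
    have hXmem : (X i : MvPolynomial (Fin n) (ZMod 2))
        ∈ (relIdeal G ⊔ sqfreeIdeal n a) ⊔ fieldEqIdeal n := by
      have h2 : (X i : MvPolynomial (Fin n) (ZMod 2))
          ∈ Ideal.comap q (((relIdeal G ⊔ sqfreeIdeal n a)).map q) :=
        Ideal.mem_comap.mpr hmem
      rwa [Ideal.comap_map_of_surjective q hqsurj, ← RingHom.ker_eq_comap_bot,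
        hqdef, Ideal.mk_ker] at h2
    have hker : (relIdeal G ⊔ sqfreeIdeal n a) ⊔ fieldEqIdeal n
        ≤ RingHom.ker (MvPolynomial.eval v :
            MvPolynomial (Fin n) (ZMod 2) →+* ZMod 2) := by
      refine sup_le (sup_le ?_ ?_) (BinAux.fieldEq_le_ker_eval v)
      · intro f hf
        rw [RingHom.mem_ker]
        obtain ⟨u, hu⟩ := hv
        have hγf : (aeval (dualForm G)) f = 0 := hf
        have h0 : eval u (aeval (dualForm G) f) = 0 := by rw [hγf, map_zero]
        rw [BinAux.eval_aeval_dualForm G u f] at h0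
        rwa [show Matrix.vecMul u G = v from by
          rw [← Matrix.vecMulLinear_apply]; exact hu] at h0
      · rw [sqfreeIdeal, Ideal.span_le]
        rintro f ⟨T, hT, rfl⟩
        rw [SetLike.mem_coe, RingHom.mem_ker, map_prod]
        have hz : ∃ j ∈ T, v j = 0 := by
          by_contra hall
          push_neg at hall
          have hsub : T ⊆ Finset.univ.filter (fun j => v j ≠ 0) := by
            intro j hj
            rw [Finset.mem_filter]
            exact ⟨Finset.mem_univ j, fun h0 => hall j hj h0⟩
          have hnorm : hammingNorm v = (Finset.univ.filter fun j => v j ≠ 0).card := by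
            simp [hammingNorm]
          have hle : a ≤ hammingNorm v := by
            rw [hnorm, ← hT]
            exact Finset.card_le_card hsub
          omega
        obtain ⟨j, hjT, hj0⟩ := hz
        exact Finset.prod_eq_zero hjT (by rw [eval_X, hj0])
    have hfin := hker hXmem
    rw [RingHom.mem_ker, eval_X] at hfin
    exact hvi hfin
  · -- a ≤ d ⇒ equality
    intro had
    apply le_antisymm
    · rw [Ideal.add_eq_sup, ← Ideal.map_sup]
      apply Ideal.map_mono
      refine sup_le ?_ ?_
      · intro f hf
        have hγf : (aeval (dualForm G)) f = 0 := hf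
        have h0 : constantCoeff f = 0 := by
          have h1 : eval (0 : Fin k → ZMod 2) (aeval (dualForm G) f) = 0 := by
            rw [hγf, map_zero]
          rwa [BinAux.eval_aeval_dualForm G 0 f, Matrix.zero_vecMul, eval_zero] at h1
        rw [← Set.image_univ, mem_ideal_span_X_image]
        intro m hm
        have hmne : m ≠ 0 := by
          intro hm0
          rw [MvPolynomial.mem_support_iff, hm0, ← constantCoeff_eq] at hm
          exact hm h0
        obtain ⟨i, hi⟩ := Finsupp.ne_iff.mp hmne
        exact ⟨i, Set.mem_univ i, hi⟩
      · rw [sqfreeIdeal, Ideal.span_le]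
        rintro f ⟨T, hT, rfl⟩
        have hTne : T.Nonempty := Finset.card_pos.mp (by omega)
        obtain ⟨j0, hj0⟩ := hTne
        rw [SetLike.mem_coe, ← Finset.mul_prod_erase T _ hj0]
        exact Ideal.mul_mem_right _ _ (Ideal.subset_span ⟨j0, rfl⟩)
    · rw [Ideal.map_span, Ideal.span_le, Ideal.add_eq_sup]
      rintro y ⟨x, ⟨i, rfl⟩, rfl⟩
      have hXi : q (X i) = ∑ v ∈ Finset.univ.filter (fun v : Fin n → ZMod 2 => v i = 1),
          q (BinAux.bInd v) := by
        rw [← map_sum]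
        exact Ideal.Quotient.eq.mpr (BinAux.X_sub_sum_bInd i)
      rw [SetLike.mem_coe, hXi]
      apply Submodule.sum_mem
      intro v hvfil
      rw [Finset.mem_filter] at hvfil
      by_cases hcase : a ≤ hammingNorm v
      · have hb : BinAux.bInd v ∈ sqfreeIdeal n a := by
          have hnorm : hammingNorm v = (Finset.univ.filter fun j => v j ≠ 0).card := by
            simp [hammingNorm]
          rw [hnorm] at hcase
          obtain ⟨T, hTsub, hTcard⟩ := Finset.exists_subset_card_eq hcase
          rw [BinAux.bInd, ← Finset.prod_mul_prod_compl T]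
          have hTprod : ∏ j ∈ T, ((X j : MvPolynomial (Fin n) (ZMod 2)) + C (v j) + 1)
              = ∏ j ∈ T, X j := by
            apply Finset.prod_congr rfl
            intro j hj
            have hvj : v j = 1 := by
              have hne := hTsub hj
              simp only [Finset.mem_filter, Finset.mem_univ, true_and] at hne
              have h01 : ∀ x : ZMod 2, x ≠ 0 → x = 1 := by decide
              exact h01 _ hne
            rw [hvj]
            have h2 : (C (1 : ZMod 2) : MvPolynomial (Fin n) (ZMod 2)) + 1 = 0 := by
              rw [map_one]
              rw [show ((1 : MvPolynomial (Fin n) (ZMod 2)) + 1) = 2 from by ring]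
              exact_mod_cast CharP.cast_eq_zero (MvPolynomial (Fin n) (ZMod 2)) 2
            rw [add_assoc, h2, add_zero]
          rw [hTprod]
          exact Ideal.mul_mem_right _ _ (Ideal.subset_span ⟨T, hTcard, rfl⟩)
        exact Submodule.mem_sup_right (Ideal.mem_map_of_mem q hb)
      · push_neg at hcase
        have hvnot : v ∉ code G := by
          intro hvc
          have hvne : v ≠ 0 := by
            intro h0
            rw [h0] at hvfil
            simp at hvfil
          have hdle : d ≤ hammingNorm v := hd.2 ⟨v, hvc, hvne, rfl⟩
          omega
        have hγb : aeval (dualForm G) (BinAux.bInd v) ∈ fieldEqIdeal k := by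
          apply BinAux.mem_fieldEq_of_eval_zero
          intro u
          rw [BinAux.eval_aeval_dualForm, BinAux.eval_bInd, if_neg]
          intro hEq
          exact hvnot ⟨u, by rw [Matrix.vecMulLinear_apply, hEq]⟩
        have hmem2 := BinAux.mem_rel_sup_fieldEq G
          (BinAux.aeval_dualForm_surjective G hrank) hγb
        have hb2 : q (BinAux.bInd v) ∈ (relIdeal G).map q := by
          have h3 : q (BinAux.bInd v) ∈ (relIdeal G ⊔ fieldEqIdeal n).map q :=
            Ideal.mem_map_of_mem q hmem2
          rwa [Ideal.map_sup, hqdef, Ideal.map_quotient_self, sup_bot_eq] at h3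
        exact Submodule.mem_sup_left hb2
end
end

section
/- In the ring S̄ = 𝔽_2[y_1,…,y_n]/⟨y_1²−y_1,…,y_n²−y_n⟩, the ideals F_a := Ī(Y, n−a) form a multiplicative filtration: for all integers a, b ≥ 0, one has F_a · F_b ⊆ F_{a+b}, i.e., Ī(Y,n−a) · Ī(Y,n−b) ⊆ Ī(Y, n−a−b). -/
open scoped Classical
open MvPolynomial

set_option synthInstance.maxHeartbeats 1000000

noncomputable section

lemma mk_X_idem {n : ℕ} (i : Fin n) :
    Ideal.Quotient.mk (fieldEqIdeal n) (MvPolynomial.X i) *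
      Ideal.Quotient.mk (fieldEqIdeal n) (MvPolynomial.X i) =
    Ideal.Quotient.mk (fieldEqIdeal n) (MvPolynomial.X i) := by
  rw [← map_mul, Ideal.Quotient.eq]
  have : MvPolynomial.X (R := ZMod 2) i * MvPolynomial.X i - MvPolynomial.X i
      = MvPolynomial.X i ^ 2 - MvPolynomial.X i := by ring
  rw [this]
  exact Ideal.subset_span ⟨i, rfl⟩

lemma mk_prod_idem {n : ℕ} (T : Finset (Fin n)) :
    (∏ i ∈ T, Ideal.Quotient.mk (fieldEqIdeal n) (MvPolynomial.X i)) *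
      (∏ i ∈ T, Ideal.Quotient.mk (fieldEqIdeal n) (MvPolynomial.X i)) =
    ∏ i ∈ T, Ideal.Quotient.mk (fieldEqIdeal n) (MvPolynomial.X i) := by
  rw [← Finset.prod_mul_distrib]
  exact Finset.prod_congr rfl fun i _ => mk_X_idem i

lemma prod_union_of_idem {M : Type*} [CommMonoid M] {α : Type*} [DecidableEq α]
    (f : α → M) (h : ∀ i, f i * f i = f i) (T U : Finset α) :
    (∏ i ∈ T, f i) * (∏ i ∈ U, f i) = ∏ i ∈ T ∪ U, f i := by
  induction U using Finset.induction_on with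
  | empty => simp
  | @insert j U hj ih =>
    rw [Finset.prod_insert hj, Finset.union_insert]
    by_cases hjTU : j ∈ T ∪ U
    · rw [Finset.insert_eq_self.2 hjTU]
      calc (∏ i ∈ T, f i) * (f j * ∏ i ∈ U, f i)
          = f j * ((∏ i ∈ T, f i) * (∏ i ∈ U, f i)) := by
            rw [mul_left_comm]
        _ = f j * ∏ i ∈ T ∪ U, f i := by rw [ih]
        _ = f j * (f j * ∏ i ∈ (T ∪ U).erase j, f i) := by
            rw [Finset.mul_prod_erase _ f hjTU]
        _ = (f j * f j) * ∏ i ∈ (T ∪ U).erase j, f i := by rw [mul_assoc]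
        _ = f j * ∏ i ∈ (T ∪ U).erase j, f i := by rw [h]
        _ = ∏ i ∈ T ∪ U, f i := Finset.mul_prod_erase _ f hjTU
    · rw [Finset.prod_insert hjTU, ← ih, mul_left_comm]
  
lemma mk_prod_union {n : ℕ} (T U : Finset (Fin n)) :
    (∏ i ∈ T, Ideal.Quotient.mk (fieldEqIdeal n) (MvPolynomial.X i)) *
      (∏ i ∈ U, Ideal.Quotient.mk (fieldEqIdeal n) (MvPolynomial.X i)) =
    ∏ i ∈ T ∪ U, Ideal.Quotient.mk (fieldEqIdeal n) (MvPolynomial.X i) :=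
  prod_union_of_idem _ mk_X_idem T U

/-- in `S̄ = 𝔽₂[y_1,…,y_n]/⟨y_i²−y_i⟩` the ideals
`F_a = Ī(Y,n−a)` form a multiplicative filtration:
`Ī(Y,n−a)·Ī(Y,n−b) ⊆ Ī(Y,n−a−b)` for all `a, b ≥ 0`. -/
theorem sqfree_filtration_mul {n : ℕ} :
    ∀ a b : ℕ,
      (sqfreeIdeal n (n - a)).map (Ideal.Quotient.mk (fieldEqIdeal n)) *
          (sqfreeIdeal n (n - b)).map (Ideal.Quotient.mk (fieldEqIdeal n)) ≤
        (sqfreeIdeal n (n - a - b)).map (Ideal.Quotient.mk (fieldEqIdeal n)) := by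
  intro a b
  rw [← Ideal.map_mul]
  -- reduce to a statement in S
  have key : sqfreeIdeal n (n - a) * sqfreeIdeal n (n - b) ≤
      sqfreeIdeal n (n - a - b) ⊔ fieldEqIdeal n := by
    rw [sqfreeIdeal, sqfreeIdeal, Ideal.span_mul_span', Ideal.span_le]
    rintro x ⟨p, ⟨T, hT, rfl⟩, q, ⟨U, hU, rfl⟩, rfl⟩
    -- pick W ⊆ T ∪ U with card n - a - b
    have hcard : n - a - b ≤ (T ∪ U).card := by
      calc n - a - b ≤ n - a := Nat.sub_le _ _
        _ = T.card := hT.symm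
        _ ≤ (T ∪ U).card := Finset.card_le_card Finset.subset_union_left
    obtain ⟨W, hWsub, hWcard⟩ := Finset.exists_subset_card_eq hcard
    have hmemK : (∏ i ∈ T ∪ U, MvPolynomial.X (R := ZMod 2) i) ∈ sqfreeIdeal n (n - a - b) := by
      rw [← Finset.prod_sdiff hWsub]
      exact Ideal.mul_mem_left _ _ (Ideal.subset_span ⟨W, hWcard, rfl⟩)
    have hE : (∏ i ∈ T, MvPolynomial.X (R := ZMod 2) i) * (∏ i ∈ U, MvPolynomial.X i)
        - (∏ i ∈ T ∪ U, MvPolynomial.X i) ∈ fieldEqIdeal n := by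
      rw [← Ideal.Quotient.eq]
      rw [map_mul, map_prod, map_prod, map_prod]
      exact mk_prod_union T U
    have : (∏ i ∈ T, MvPolynomial.X (R := ZMod 2) i) * (∏ i ∈ U, MvPolynomial.X i)
        = (∏ i ∈ T ∪ U, MvPolynomial.X i)
          + ((∏ i ∈ T, MvPolynomial.X i) * (∏ i ∈ U, MvPolynomial.X i)
            - (∏ i ∈ T ∪ U, MvPolynomial.X i)) := by ring
    dsimp only
    rw [this]
    exact Submodule.add_mem _ (Ideal.mem_sup_left hmemK) (Ideal.mem_sup_right hE)
  calc Ideal.map (Ideal.Quotient.mk (fieldEqIdeal n))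
        (sqfreeIdeal n (n - a) * sqfreeIdeal n (n - b))
      ≤ Ideal.map (Ideal.Quotient.mk (fieldEqIdeal n))
        (sqfreeIdeal n (n - a - b) ⊔ fieldEqIdeal n) := Ideal.map_mono key
    _ = (sqfreeIdeal n (n - a - b)).map (Ideal.Quotient.mk (fieldEqIdeal n)) := by
        rw [Ideal.map_sup, Ideal.map_quotient_self, sup_bot_eq]
end
end

section
/- Let C be an [n,k,d] binary linear code. Consider the filtration F_i = Ī(Y,n−i) on S̄ and the induced filtration F_i(S̄/F̄(C)) = (F̄(C)+Ī(Y,n−i))/F̄(C) on S̄/F̄(C). Then the positive-degree part of the associated graded module has α-invariant n−d; concretely: (i) for every integer a with 1 ≤ a < d one has F̄(C) + Ī(Y,a) = F̄(C) + Ī(Y,a+1) (so the graded pieces in degrees n−d+1,…,n−1 vanish), and (ii) F̄(C) + Ī(Y,d) ≠ F̄(C) + Ī(Y,d+1) (so the graded piece in degree n−d is nonzero). -/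
open scoped Classical
open MvPolynomial

set_option synthInstance.maxHeartbeats 1000000

noncomputable section

/-! ### Auxiliary machinery -/

/-- Evaluation at all points of `𝔽₂ⁿ`. -/
def evalAll (n : ℕ) : MvPolynomial (Fin n) (ZMod 2) →+* ((Fin n → ZMod 2) → ZMod 2) :=
  Pi.ringHom fun p => MvPolynomial.eval p

@[simp] lemma evalAll_apply {n : ℕ} (f : MvPolynomial (Fin n) (ZMod 2)) (p : Fin n → ZMod 2) :
    evalAll n f p = MvPolynomial.eval p f := rfl

lemma two_eq_zero_poly (n : ℕ) : (2 : MvPolynomial (Fin n) (ZMod 2)) = 0 := by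
  rw [← map_ofNat (C : ZMod 2 →+* MvPolynomial (Fin n) (ZMod 2)) 2,
    show (2 : ZMod 2) = 0 by decide, map_zero]

/-- The multilinear indicator polynomial of the point `p`. -/
def deltaPoly {n : ℕ} (p : Fin n → ZMod 2) : MvPolynomial (Fin n) (ZMod 2) :=
  ∏ i, if p i = 0 then 1 + X i else X i

lemma eval_deltaPoly {n : ℕ} (p q : Fin n → ZMod 2) :
    MvPolynomial.eval q (deltaPoly p) = if p = q then 1 else 0 := by
  rw [deltaPoly, map_prod]
  have h : ∀ i, MvPolynomial.eval q
      (if p i = 0 then 1 + X i else (X i : MvPolynomial (Fin n) (ZMod 2)))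
      = if p i = q i then 1 else 0 := by
    intro i
    have key : ∀ a b : ZMod 2, (if a = 0 then 1 + b else b) = if a = b then 1 else 0 := by decide
    rw [← key (p i) (q i)]
    split <;> simp
  simp only [h]
  by_cases hpq : p = q
  · simp [hpq]
  · obtain ⟨i, hi⟩ : ∃ i, p i ≠ q i := by
      by_contra hc; push_neg at hc; exact hpq (funext hc)
    rw [if_neg hpq]
    exact Finset.prod_eq_zero (Finset.mem_univ i) (by simp [hi])

lemma evalAll_surjective (n : ℕ) : Function.Surjective (evalAll n) := by
  intro h
  refine ⟨∑ p : Fin n → ZMod 2, C (h p) * deltaPoly p, ?_⟩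
  funext q
  simp only [evalAll_apply, map_sum, map_mul, eval_C, eval_deltaPoly, mul_ite, mul_one, mul_zero]
  simp

lemma sum_deltaPoly (n : ℕ) :
    ∑ p : Fin n → ZMod 2, deltaPoly p = (1 : MvPolynomial (Fin n) (ZMod 2)) := by
  have h2 := two_eq_zero_poly n
  have h1 : (∏ i : Fin n, ∑ b : ZMod 2,
      if b = 0 then 1 + X i else (X i : MvPolynomial (Fin n) (ZMod 2))) = 1 := by
    refine Finset.prod_eq_one fun i _ => ?_
    have hsum : (∑ b : ZMod 2, if b = 0 then 1 + X i else (X i : MvPolynomial (Fin n) (ZMod 2)))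
        = (if (0 : ZMod 2) = 0 then 1 + X i else X i)
          + (if (1 : ZMod 2) = 0 then 1 + X i else X i) :=
      Fin.sum_univ_two _
    rw [hsum, if_pos rfl, if_neg (by decide : (1 : ZMod 2) ≠ 0)]
    linear_combination (X i : MvPolynomial (Fin n) (ZMod 2)) * h2
  rw [Fintype.prod_sum] at h1
  simpa only [deltaPoly] using h1

lemma mk_delta_mul_X {n : ℕ} (p : Fin n → ZMod 2) (i : Fin n) :
    Ideal.Quotient.mk (fieldEqIdeal n) (deltaPoly p * X i)
      = Ideal.Quotient.mk (fieldEqIdeal n) (C (p i) * deltaPoly p) := by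
  rw [Ideal.Quotient.eq]
  set r : MvPolynomial (Fin n) (ZMod 2) :=
    ∏ j ∈ Finset.univ.erase i, (if p j = 0 then 1 + X j else X j) with hr
  have hfac : deltaPoly p = (if p i = 0 then 1 + X i else X i) * r := by
    rw [deltaPoly, hr]
    exact (Finset.mul_prod_erase Finset.univ
      (fun j => if p j = 0 then 1 + X j else (X j : MvPolynomial (Fin n) (ZMod 2)))
      (Finset.mem_univ i)).symm
  have hgen : (X i ^ 2 - X i : MvPolynomial (Fin n) (ZMod 2)) ∈ fieldEqIdeal n :=
    Ideal.subset_span ⟨i, rfl⟩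
  have h2 := two_eq_zero_poly n
  rcases (by decide : ∀ a : ZMod 2, a = 0 ∨ a = 1) (p i) with h0 | h1
  · have heq : deltaPoly p * X i - C (p i) * deltaPoly p = (X i ^ 2 - X i) * r := by
      rw [hfac, h0, if_pos rfl, map_zero]
      linear_combination (X i * r : MvPolynomial (Fin n) (ZMod 2)) * h2
    rw [heq]
    exact Ideal.mul_mem_right r _ hgen
  · have heq : deltaPoly p * X i - C (p i) * deltaPoly p = (X i ^ 2 - X i) * r := by
      rw [hfac, h1, if_neg (by decide : (1 : ZMod 2) ≠ 0), map_one]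
      ring
    rw [heq]
    exact Ideal.mul_mem_right r _ hgen

lemma mk_eq_sum {n : ℕ} (f : MvPolynomial (Fin n) (ZMod 2)) :
    Ideal.Quotient.mk (fieldEqIdeal n) f
      = ∑ p : Fin n → ZMod 2,
          Ideal.Quotient.mk (fieldEqIdeal n) (C (MvPolynomial.eval p f) * deltaPoly p) := by
  induction f using MvPolynomial.induction_on with
  | C a =>
      rw [← map_sum]
      simp only [eval_C]
      rw [← Finset.mul_sum, sum_deltaPoly, mul_one]
  | add f g hf hg =>
      rw [map_add, hf, hg, ← Finset.sum_add_distrib]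
      refine Finset.sum_congr rfl fun p _ => ?_
      rw [← map_add, show C ((eval p) f) * deltaPoly p + C ((eval p) g) * deltaPoly p
          = C ((eval p) (f + g)) * deltaPoly p by
        rw [map_add (eval p), map_add (C : ZMod 2 →+* _), add_mul]]
  | mul_X f i hf =>
      rw [map_mul, hf, Finset.sum_mul]
      refine Finset.sum_congr rfl fun p _ => ?_
      rw [← map_mul, mul_assoc,
        map_mul (Ideal.Quotient.mk (fieldEqIdeal n)) (C ((eval p) f)) (deltaPoly p * X i),
        mk_delta_mul_X, ← map_mul,
        show C ((eval p) f) * (C (p i) * deltaPoly p) = C ((eval p) (f * X i)) * deltaPoly p by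
          rw [map_mul (eval p), eval_X, ← mul_assoc, ← map_mul (C : ZMod 2 →+* _)]]

lemma fieldEq_le_ker (n : ℕ) : fieldEqIdeal n ≤ RingHom.ker (evalAll n) := by
  rw [fieldEqIdeal, Ideal.span_le]
  rintro f ⟨i, rfl⟩
  have h : ∀ a : ZMod 2, a ^ 2 - a = 0 := by decide
  simp only [SetLike.mem_coe, RingHom.mem_ker]
  funext p
  simp [h]

lemma ker_evalAll (n : ℕ) : RingHom.ker (evalAll n) = fieldEqIdeal n := by
  refine le_antisymm ?_ (fieldEq_le_ker n)
  intro f hf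
  rw [RingHom.mem_ker] at hf
  have h0 : ∀ p, MvPolynomial.eval p f = 0 := fun p => congrFun hf p
  have hm := mk_eq_sum f
  simp only [h0, map_zero, zero_mul, Finset.sum_const_zero] at hm
  exact Ideal.Quotient.eq_zero_iff_mem.mp hm

/-- The "non-vanishing locus" of an ideal of polynomials. -/
def NS {n : ℕ} (J : Ideal (MvPolynomial (Fin n) (ZMod 2))) : Set (Fin n → ZMod 2) :=
  {p | ∃ f ∈ J, MvPolynomial.eval p f ≠ 0}

lemma mem_of_pts {n : ℕ} {J : Ideal ((Fin n → ZMod 2) → ZMod 2)} {f : (Fin n → ZMod 2) → ZMod 2}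
    (h : ∀ p, f p ≠ 0 → ∃ g ∈ J, g p ≠ 0) : f ∈ J := by
  have hrep : f = ∑ p : Fin n → ZMod 2, f p • (fun q => if q = p then (1 : ZMod 2) else 0) := by
    funext q
    simp only [Finset.sum_apply, Pi.smul_apply, smul_eq_mul, mul_ite, mul_one, mul_zero]
    simp
  rw [hrep]
  refine Ideal.sum_mem J fun p _ => ?_
  by_cases hp : f p = 0
  · rw [hp, zero_smul]; exact J.zero_mem
  · obtain ⟨g, hg, hgp⟩ := h p hp
    have hfp : f p = 1 := by
      rcases (by decide : ∀ a : ZMod 2, a = 0 ∨ a = 1) (f p) with h' | h'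
      · exact absurd h' hp
      · exact h'
    have hgp1 : g p = 1 := by
      rcases (by decide : ∀ a : ZMod 2, a = 0 ∨ a = 1) (g p) with h' | h'
      · exact absurd h' hgp
      · exact h'
    have hmul : (fun q => if q = p then (1 : ZMod 2) else 0)
        = (fun q => if q = p then (1 : ZMod 2) else 0) * g := by
      funext q
      by_cases hq : q = p
      · simp [hq, hgp1]
      · simp [hq]
    rw [hfp, one_smul, hmul]
    exact J.mul_mem_left _ hg

lemma ideal_ext_pts {n : ℕ} {J₁ J₂ : Ideal ((Fin n → ZMod 2) → ZMod 2)}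
    (h : ∀ p, (∃ g ∈ J₁, g p ≠ 0) ↔ ∃ g ∈ J₂, g p ≠ 0) : J₁ = J₂ := by
  ext f
  constructor
  · intro hf
    exact mem_of_pts fun p hp => (h p).mp ⟨f, hf, hp⟩
  · intro hf
    exact mem_of_pts fun p hp => (h p).mpr ⟨f, hf, hp⟩

lemma exists_in_map_iff {n : ℕ} (J : Ideal (MvPolynomial (Fin n) (ZMod 2))) (p : Fin n → ZMod 2) :
    (∃ g ∈ J.map (evalAll n), g p ≠ 0) ↔ p ∈ NS J := by
  constructor
  · rintro ⟨g, hg, hgp⟩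
    by_contra hc
    have hall : ∀ f ∈ J, MvPolynomial.eval p f = 0 := by
      intro f hf
      by_contra h0
      exact hc ⟨f, hf, h0⟩
    have hle : J.map (evalAll n) ≤ RingHom.ker (Pi.evalRingHom (fun _ => ZMod 2) p) := by
      rw [Ideal.map_le_iff_le_comap]
      intro f hf
      rw [Ideal.mem_comap, RingHom.mem_ker]
      exact hall f hf
    exact hgp (hle hg)
  · rintro ⟨f, hf, hfp⟩
    exact ⟨evalAll n f, Ideal.mem_map_of_mem _ hf, hfp⟩

lemma map_eq_iff_sup_ker {R A : Type*} [CommRing R] [CommRing A] (f : R →+* A)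
    (hf : Function.Surjective f) (J₁ J₂ : Ideal R) :
    J₁.map f = J₂.map f ↔ J₁ ⊔ RingHom.ker f = J₂ ⊔ RingHom.ker f := by
  constructor
  · intro h
    have h2 := congrArg (Ideal.comap f) h
    rwa [Ideal.comap_map_of_surjective f hf, Ideal.comap_map_of_surjective f hf,
      ← RingHom.ker_eq_comap_bot] at h2
  · intro h
    have hker : (RingHom.ker f).map f = ⊥ := by
      rw [← le_bot_iff, Ideal.map_le_iff_le_comap, RingHom.ker_eq_comap_bot]
    have h2 := congrArg (Ideal.map f) h
    rwa [Ideal.map_sup, Ideal.map_sup, hker, sup_bot_eq, sup_bot_eq] at h2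

lemma NS_sup {n : ℕ} (J₁ J₂ : Ideal (MvPolynomial (Fin n) (ZMod 2))) :
    NS (J₁ ⊔ J₂) = NS J₁ ∪ NS J₂ := by
  ext p
  constructor
  · rintro ⟨f, hf, hfp⟩
    rw [Submodule.mem_sup] at hf
    obtain ⟨a, ha, b, hb, rfl⟩ := hf
    rw [map_add] at hfp
    by_cases h : MvPolynomial.eval p a = 0
    · right
      refine ⟨b, hb, fun hb0 => hfp ?_⟩
      rw [h, hb0, add_zero]
    · left; exact ⟨a, ha, h⟩
  · rintro (⟨f, hf, hfp⟩ | ⟨f, hf, hfp⟩)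
    · exact ⟨f, Ideal.mem_sup_left hf, hfp⟩
    · exact ⟨f, Ideal.mem_sup_right hf, hfp⟩

lemma hammingNorm_eq {n : ℕ} (p : Fin n → ZMod 2) :
    hammingNorm p = (Finset.univ.filter fun i => p i ≠ 0).card := by
  rw [hammingNorm]

lemma NS_sqfree {n a : ℕ} : NS (sqfreeIdeal n a) = {p | a ≤ hammingNorm p} := by
  ext p
  constructor
  · rintro ⟨f, hf, hfp⟩
    by_contra hlt
    rw [Set.mem_setOf_eq, not_le, hammingNorm_eq] at hlt
    apply hfp
    have hle : sqfreeIdeal n a ≤ RingHom.ker (MvPolynomial.eval p) := by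
      rw [sqfreeIdeal, Ideal.span_le]
      rintro g ⟨T, hT, rfl⟩
      have hex : ∃ i ∈ T, p i = 0 := by
        by_contra hc
        push_neg at hc
        have hsub : T ⊆ Finset.univ.filter fun i => p i ≠ 0 := fun i hi => by
          simp only [Finset.mem_filter, Finset.mem_univ, true_and]
          exact hc i hi
        have hcard := Finset.card_le_card hsub
        rw [hT] at hcard
        exact absurd hcard (not_le.mpr hlt)
      obtain ⟨i, hiT, hip⟩ := hex
      rw [SetLike.mem_coe, RingHom.mem_ker, map_prod]
      exact Finset.prod_eq_zero hiT (by simp [hip])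
    exact hle hf
  · intro hp
    rw [Set.mem_setOf_eq, hammingNorm_eq] at hp
    obtain ⟨T, hTsub, hTcard⟩ := Finset.exists_subset_card_eq hp
    refine ⟨∏ i ∈ T, X i, Ideal.subset_span ⟨T, hTcard, rfl⟩, ?_⟩
    rw [map_prod]
    rw [Finset.prod_eq_one fun i hi => ?_]
    · exact one_ne_zero
    · rw [eval_X]
      have hmem := hTsub hi
      simp only [Finset.mem_filter, Finset.mem_univ, true_and] at hmem
      rcases (by decide : ∀ x : ZMod 2, x = 0 ∨ x = 1) (p i) with h' | h'
      · exact absurd h' hmem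
      · exact h'

lemma NS_rel {k n : ℕ} (G : Matrix (Fin k) (Fin n) (ZMod 2)) (hrank : G.rank = k) :
    NS (relIdeal G) = (↑(code G) : Set (Fin n → ZMod 2))ᶜ := by
  ext p
  constructor
  · rintro ⟨f, hf, hfp⟩ hpC
    obtain ⟨x, rfl⟩ := hpC
    rw [relIdeal, RingHom.mem_ker] at hf
    apply hfp
    have hγ : MvPolynomial.aeval (dualForm G) f = 0 := hf
    have hcomp : MvPolynomial.eval (Matrix.vecMulLinear G x) f
        = MvPolynomial.eval x (MvPolynomial.aeval (dualForm G) f) := by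
      have hpt : (⇑(MvPolynomial.eval x) ∘ dualForm G) = Matrix.vecMulLinear G x := by
        funext i
        rw [Function.comp_apply, Matrix.vecMulLinear_apply]
        rw [show Matrix.vecMul x G i = ∑ j, x j * G j i from by
          simp [Matrix.vecMul, dotProduct]]
        rw [dualForm, map_sum]
        refine Finset.sum_congr rfl fun j _ => ?_
        rw [map_mul, eval_C, eval_X, mul_comm]
      rw [aeval_def, MvPolynomial.algebraMap_eq, ← MvPolynomial.eval_assoc, hpt]
    rw [hcomp, hγ, map_zero]
  · intro hpC
    by_contra hc
    simp only [NS, Set.mem_setOf_eq, not_exists, not_and] at hc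
    push_neg at hc
    apply hpC
    have hsurj : Function.Surjective (Matrix.mulVecLin G) := by
      rw [← LinearMap.range_eq_top]
      apply Submodule.eq_top_of_finrank_eq
      have hr : Matrix.rank G = Module.finrank (ZMod 2) (LinearMap.range G.mulVecLin) := rfl
      rw [← hr, hrank]
      simp [Module.finrank_pi]
    choose c hc2 using fun j => hsurj (Pi.single j 1)
    set fj : Fin k → MvPolynomial (Fin n) (ZMod 2) := fun j => ∑ i, C (c j i) * X i with hfj
    have hγfj : ∀ j, MvPolynomial.aeval (dualForm G) (fj j) = X j := by
      intro j
      calc MvPolynomial.aeval (dualForm G) (fj j)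
          = ∑ i, C (c j i) * ∑ m, C (G m i) * X m := by
            simp only [hfj, map_sum, map_mul, aeval_C, aeval_X, MvPolynomial.algebraMap_eq,
              dualForm]
        _ = ∑ m, ∑ i, C (c j i) * (C (G m i) * X m) := by
            simp only [Finset.mul_sum]
            exact Finset.sum_comm
        _ = ∑ m, C (∑ i, G m i * c j i) * X m := by
            refine Finset.sum_congr rfl fun m _ => ?_
            rw [map_sum, Finset.sum_mul]
            refine Finset.sum_congr rfl fun i _ => ?_
            rw [← mul_assoc, ← map_mul, mul_comm (c j i) (G m i)]
        _ = ∑ m, C (G.mulVec (c j) m) * X m := by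
            refine Finset.sum_congr rfl fun m _ => ?_
            rw [show G.mulVec (c j) m = ∑ i, G m i * c j i from by
              simp [Matrix.mulVec, dotProduct]]
        _ = ∑ m, C (Pi.single j 1 m) * X m := by
            have h3 := hc2 j
            rw [Matrix.mulVecLin_apply] at h3
            simp only [h3]
            exact Finset.sum_congr rfl fun m _ => rfl
        _ = X j := by
            rw [Finset.sum_eq_single j]
            · rw [Pi.single_eq_same, MvPolynomial.C_1, one_mul]
            · intro m _ hm
              simp [Pi.single_eq_of_ne hm]
            · intro h
              exact absurd (Finset.mem_univ j) h
    set x : Fin k → ZMod 2 := fun j => MvPolynomial.eval p (fj j) with hx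
    refine ⟨x, ?_⟩
    have hmem : ∀ i, (X i - ∑ j, C (G j i) * fj j) ∈ relIdeal G := by
      intro i
      rw [relIdeal, RingHom.mem_ker]
      show MvPolynomial.aeval (dualForm G) _ = 0
      rw [map_sub, map_sum]
      simp only [map_mul, aeval_C, aeval_X, MvPolynomial.algebraMap_eq, hγfj]
      rw [dualForm, sub_self]
    funext i
    have hz := hc _ (hmem i)
    rw [map_sub, eval_X, map_sum, sub_eq_zero] at hz
    have hvm : Matrix.vecMulLinear G x i = ∑ j, x j * G j i := by
      rw [Matrix.vecMulLinear_apply]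
      simp [Matrix.vecMul, dotProduct]
    rw [hvm]
    rw [hz]
    refine Finset.sum_congr rfl fun j _ => ?_
    rw [map_mul, eval_C, mul_comm]

lemma bridge {n : ℕ} (J₁ J₂ : Ideal (MvPolynomial (Fin n) (ZMod 2))) :
    J₁.map (Ideal.Quotient.mk (fieldEqIdeal n)) = J₂.map (Ideal.Quotient.mk (fieldEqIdeal n))
      ↔ NS J₁ = NS J₂ := by
  rw [map_eq_iff_sup_ker _ Ideal.Quotient.mk_surjective, Ideal.mk_ker, ← ker_evalAll n,
    ← map_eq_iff_sup_ker (evalAll n) (evalAll_surjective n)]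
  constructor
  · intro h
    ext p
    rw [← exists_in_map_iff, ← exists_in_map_iff, h]
  · intro h
    refine ideal_ext_pts fun p => ?_
    rw [exists_in_map_iff, exists_in_map_iff, h]

/-- the positive-degree part of the associated graded module of
`S̄/F̄(C)` for the filtration `F_i = Ī(Y,n−i)` has `α`-invariant `n−d`;
concretely: (i) for `1 ≤ a < d` one has `F̄(C) + Ī(Y,a) = F̄(C) + Ī(Y,a+1)`
(the graded pieces in degrees `n−d+1,…,n−1` vanish), while
(ii) `F̄(C) + Ī(Y,d) ≠ F̄(C) + Ī(Y,d+1)` (the graded piece in degree `n−d` is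
nonzero). -/
theorem binary_assocGraded_alpha {k n d : ℕ} (hk : 0 < k) (hn : 0 < n)
    (G : Matrix (Fin k) (Fin n) (ZMod 2)) (hrank : G.rank = k) (hd : IsMinDist G d) :
    (∀ a : ℕ, 1 ≤ a → a < d →
      (relIdeal G).map (Ideal.Quotient.mk (fieldEqIdeal n)) +
          (sqfreeIdeal n a).map (Ideal.Quotient.mk (fieldEqIdeal n)) =
        (relIdeal G).map (Ideal.Quotient.mk (fieldEqIdeal n)) +
          (sqfreeIdeal n (a + 1)).map (Ideal.Quotient.mk (fieldEqIdeal n))) ∧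
    (relIdeal G).map (Ideal.Quotient.mk (fieldEqIdeal n)) +
        (sqfreeIdeal n d).map (Ideal.Quotient.mk (fieldEqIdeal n)) ≠
      (relIdeal G).map (Ideal.Quotient.mk (fieldEqIdeal n)) +
        (sqfreeIdeal n (d + 1)).map (Ideal.Quotient.mk (fieldEqIdeal n)) := by
  have hNS : ∀ a : ℕ, NS (relIdeal G ⊔ sqfreeIdeal n a)
      = (↑(code G) : Set (Fin n → ZMod 2))ᶜ ∪ {p | a ≤ hammingNorm p} := by
    intro a
    rw [NS_sup, NS_rel G hrank, NS_sqfree]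
  constructor
  · intro a ha1 had
    rw [Submodule.add_eq_sup, Submodule.add_eq_sup, ← Ideal.map_sup, ← Ideal.map_sup, bridge,
      hNS, hNS]
    ext p
    simp only [Set.mem_union, Set.mem_compl_iff, SetLike.mem_coe, Set.mem_setOf_eq]
    constructor
    · rintro (h | h)
      · exact Or.inl h
      · by_cases hC : p ∈ code G
        · rcases eq_or_ne p 0 with rfl | hp0
          · rw [hammingNorm_zero] at h
            omega
          · have hdp : d ≤ hammingNorm p := hd.2 ⟨p, hC, hp0, rfl⟩
            right
            omega
        · exact Or.inl hC
    · rintro (h | h)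
      · exact Or.inl h
      · right
        omega
  · rw [Submodule.add_eq_sup, Submodule.add_eq_sup, ← Ideal.map_sup, ← Ideal.map_sup, Ne,
      bridge, hNS, hNS]
    intro hEq
    obtain ⟨v, hvC, hv0, hvw⟩ := hd.1
    have h1 : v ∈ (↑(code G) : Set (Fin n → ZMod 2))ᶜ ∪ {p | d ≤ hammingNorm p} := by
      right
      rw [Set.mem_setOf_eq, hvw]
    rw [hEq] at h1
    rcases h1 with h | h
    · exact h hvC
    · rw [Set.mem_setOf_eq, hvw] at h
      omega
end
end
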